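/- Let E be a fractional Brauer configuration of type S, and let u, v be formal paths in 𝓔 with u R v. If w is a composable formal path such that the concatenation wu again lies in 𝓔 (i.e., is the formal sequence of a standard sequence), then wv also lies in 𝓔 and (wu) R (wv). -/
import Mathlib


/-- A fractional Brauer configuration `E = (E, P, L, d)`:
a `G`-set `E` for `G = ⟨g⟩` infinite cyclic (encoded by the permutation `g`,
so that `g ^ n` for `n : ℤ` gives the `G`-action), two partitions `P` and `L`
of `E` (encoded by the class maps `e ↦ P e`, `e ↦ L e`), and a degree function
`d : E → ℤ₊`, subject to conditions (f1)–(f6). -/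
structure FracBrauerConfig (E : Type*) where
  g : Equiv.Perm E
  P : E → Set E
  L : E → Set E
  d : E → ℕ
  d_pos : ∀ e, 0 < d e
  mem_P : ∀ e, e ∈ P e
  P_class : ∀ e₁ e₂, e₂ ∈ P e₁ → P e₁ = P e₂
  mem_L : ∀ e, e ∈ L e
  L_class : ∀ e₁ e₂, e₂ ∈ L e₁ → L e₁ = L e₂
  /-- (f1) `L(e) ⊆ P(e)` -/
  L_subset_P : ∀ e, L e ⊆ P e
  /-- (f1) each polygon is finite -/
  P_finite : ∀ e, (P e).Finite
  /-- (f2) -/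
  f2 : ∀ e₁ e₂, L e₁ = L e₂ → P (g e₁) = P (g e₂)
  /-- (f3) `d` is constant on `⟨g⟩`-orbits -/
  f3 : ∀ (e : E) (n : ℤ), d ((g ^ n) e) = d e
  /-- (f4) -/
  f4 : ∀ e₁ e₂, P e₁ = P e₂ ↔ P ((g ^ (d e₁ : ℤ)) e₁) = P ((g ^ (d e₂ : ℤ)) e₂)
  /-- (f5) -/
  f5 : ∀ e₁ e₂, L e₁ = L e₂ ↔ L ((g ^ (d e₁ : ℤ)) e₁) = L ((g ^ (d e₂ : ℤ)) e₂)
  /-- (f6) no full formal word is a proper right-aligned subword of another -/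
  f6 : ∀ e h, (∀ i : ℕ, i < d e → L ((g ^ (i : ℤ)) e) = L ((g ^ (i : ℤ)) h)) → ¬ d e < d h

namespace FracBrauerConfig

variable {E : Type*} (C : FracBrauerConfig E)

/-- The Nakayama map `σ(e) = g^{d(e)}·e`. -/
def sigma (e : E) : E := (C.g ^ (C.d e : ℤ)) e

/-- A standard sequence `(g^{n-1}·e, …, g·e, e)` is encoded by its base angle `e`
and its length `n`, with `0 ≤ n ≤ d(e)`. -/
abbrev StdSeq := {p : E × ℕ // p.2 ≤ C.d p.1}

/-- The associated formal sequence `L(p)` of a standard sequence: the source polygon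
(accounting for the trivial-sequence label `1_{P(e)}`) together with the list of
`L`-classes `L(e), L(g·e), …, L(g^{n-1}·e)`. Two standard sequences are identical
(`p ≡ q`) exactly when their labels agree. -/
def lab (p : C.StdSeq) : Set E × List (Set E) :=
  (C.P p.1.1, (List.range p.1.2).map fun i => C.L ((C.g ^ (i : ℤ)) p.1.1))

/-- The left complement `^p` of a standard sequence `p`. -/
def lcomp (p : C.StdSeq) : C.StdSeq :=
  ⟨((C.g ^ (p.1.2 : ℤ)) p.1.1, C.d p.1.1 - p.1.2), by rw [C.f3]; exact Nat.sub_le _ _⟩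

/-- The right complement `p^∧` of a standard sequence `p`. -/
def rcomp (p : C.StdSeq) : C.StdSeq :=
  ⟨((C.g ^ ((p.1.2 : ℤ) - (C.d p.1.1 : ℤ))) p.1.1, C.d p.1.1 - p.1.2), by
    rw [C.f3]; exact Nat.sub_le _ _⟩

/-- A standard sequence is full when its length is `d(e)`. -/
def IsFull (p : C.StdSeq) : Prop := p.1.2 = C.d p.1.1

/-- Composition `q·p` of standard sequences (`p` first, then `q`), defined when the
source of `q` is the terminal `g^{len p}·(base p)` of `p` and the total length stays
within the degree bound. -/
def comp (p q : C.StdSeq) (_h1 : q.1.1 = (C.g ^ (p.1.2 : ℤ)) p.1.1)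
    (h2 : p.1.2 + q.1.2 ≤ C.d p.1.1) : C.StdSeq := ⟨(p.1.1, p.1.2 + q.1.2), h2⟩

/-- Closure `[𝒳]` of a set of standard sequences under the identity relation `≡`. -/
def cl (X : Set C.StdSeq) : Set C.StdSeq := {q | ∃ p ∈ X, C.lab q = C.lab p}

/-- The set `[[^p]^∧]`. -/
def f7set (p : C.StdSeq) : Set C.StdSeq := C.cl (C.rcomp '' C.cl {C.lcomp p})

/-- Condition (f7): `E` is of type S. -/
def TypeS : Prop := ∀ p q : C.StdSeq, C.lab p = C.lab q → C.f7set p = C.f7set q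

/-- The relation `R` on the set `𝓔` of formal sequences of standard sequences:
`u R v` iff `u = L(p)`, `v = L(q)` for standard sequences `p, q` with `^p ≡ ^q`. -/
def Rrel (u v : Set E × List (Set E)) : Prop :=
  ∃ p q : C.StdSeq, u = C.lab p ∧ v = C.lab q ∧ C.lab (C.lcomp p) = C.lab (C.lcomp q)

end FracBrauerConfig


theorem flatMap_sing {α β : Type*} (l : List α) (f : α → β) :
    (l.flatMap fun a => [f a]) = l.map f := by
  induction l <;> simp [*]

namespace FracBrauerConfig

variable {E : Type*} (C : FracBrauerConfig E)

lemma map_range_append_ext {α : Type*} {N n : ℕ} {f g : ℕ → α} {w : List α}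
    (h : (List.range N).map f = (List.range n).map g ++ w) :
    N = n + w.length ∧ (∀ i < n, f i = g i) ∧
      ∀ j (hj : j < w.length), f (n + j) = w[j] := by
  have hlen : N = n + w.length := by
    have := congrArg List.length h; simpa using this
  refine ⟨hlen, ?_, ?_⟩
  · intro i hi
    have e1 : ((List.range N).map f)[i]'(by simp; omega) = f i := by
      rw [List.getElem_map, List.getElem_range]
    rw [List.getElem_of_eq h, List.getElem_append_left (by simpa using hi),
      List.getElem_map, List.getElem_range] at e1
    exact e1.symm
  · intro j hj
    have e1 : ((List.range N).map f)[n + j]'(by simp; omega) = f (n + j) := by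
      rw [List.getElem_map, List.getElem_range]
    rw [List.getElem_of_eq h, List.getElem_append_right (by simp)] at e1
    simp only [List.length_map, List.length_range, Nat.add_sub_cancel_left] at e1
    exact e1.symm

lemma map_range_add {α : Type*} (m : ℕ) (f g : ℕ → α) (w : List α)
    (h1 : ∀ i < m, f i = g i) (h2 : ∀ j (hj : j < w.length), f (m + j) = w[j]) :
    (List.range (m + w.length)).map f = (List.range m).map g ++ w := by
  rw [List.range_add, List.map_append, List.map_map]
  congr 1
  · exact List.map_congr_left fun i hi => h1 i (List.mem_range.mp hi)
  · apply List.ext_getElem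
    · simp
    · intro i hi1 hi2
      simp only [List.getElem_map, List.getElem_range, Function.comp_apply]
      exact h2 i (by simpa using hi2)


lemma g_add (a b : ℤ) (x : E) : (C.g ^ (a + b)) x = (C.g ^ a) ((C.g ^ b) x) := by
  rw [zpow_add]; rfl

lemma g_succ (i : ℤ) (x : E) : (C.g ^ (i + 1)) x = C.g ((C.g ^ i) x) := by
  rw [add_comm, g_add, zpow_one]

lemma lab_def (s : C.StdSeq) :
    C.lab s = (C.P s.1.1, (List.range s.1.2).map fun i : ℕ => C.L ((C.g ^ (i : ℤ)) s.1.1)) := by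
  unfold lab
  refine congrArg _ ?_
  show List.map _ ((List.range s.1.2).flatMap fun a => [((a:ℕ):ℤ)]) = _
  rw [flatMap_sing, List.map_map]
  rfl

lemma lab_eq_iff (s t : C.StdSeq) : C.lab s = C.lab t ↔
    C.P s.1.1 = C.P t.1.1 ∧ s.1.2 = t.1.2 ∧
      ∀ i : ℕ, i < s.1.2 → C.L ((C.g ^ (i : ℤ)) s.1.1) = C.L ((C.g ^ (i : ℤ)) t.1.1) := by
  rw [lab_def, lab_def, Prod.ext_iff]
  constructor
  · rintro ⟨h1, h2⟩
    have hlen := congrArg List.length h2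
    rw [List.length_map, List.length_map, List.length_range, List.length_range] at hlen
    refine ⟨h1, hlen, fun i hi => ?_⟩
    have e1 : ((List.range s.1.2).map fun i : ℕ => C.L ((C.g ^ (i : ℤ)) s.1.1))[i]'(by
        simpa using hi) = C.L ((C.g ^ (i : ℤ)) s.1.1) := by
      rw [List.getElem_map, List.getElem_range]
    rw [List.getElem_of_eq h2] at e1
    rw [List.getElem_map, List.getElem_range] at e1
    exact e1.symm
  · rintro ⟨h1, h2, h3⟩
    refine ⟨h1, ?_⟩
    rw [← h2]
    apply List.map_congr_left
    intro i hi
    exact h3 i (List.mem_range.mp hi)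

lemma rcomp_lcomp (s : C.StdSeq) : C.rcomp (C.lcomp s) = s := by
  obtain ⟨⟨e, n⟩, hn⟩ := s
  unfold rcomp lcomp
  apply Subtype.ext
  simp only [C.f3]
  have h1 : ((C.d e - n : ℕ) : ℤ) - (C.d e : ℤ) = -(n : ℤ) := by
    have : (n : ℤ) ≤ C.d e := by exact_mod_cast hn
    push_cast [Nat.cast_sub hn]; ring
  have h2 : C.d e - (C.d e - n) = n := Nat.sub_sub_self hn
  rw [h1, h2]
  have : (C.g ^ (-(n:ℤ))) ((C.g ^ (n:ℤ)) e) = e := by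
    rw [← g_add]; simp
  rw [this]

lemma mem_f7set_self (s : C.StdSeq) : s ∈ C.f7set s := by
  refine ⟨C.rcomp (C.lcomp s), ⟨C.lcomp s, ⟨C.lcomp s, rfl, rfl⟩, rfl⟩, ?_⟩
  rw [C.rcomp_lcomp]

lemma f7set_eq_of_lcomp (s t : C.StdSeq) (h : C.lab (C.lcomp s) = C.lab (C.lcomp t)) :
    C.f7set s = C.f7set t := by
  unfold f7set
  have : C.cl {C.lcomp s} = C.cl {C.lcomp t} := by
    ext x
    constructor
    · rintro ⟨y, hy, hxy⟩
      simp only [Set.mem_singleton_iff] at hy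
      exact ⟨C.lcomp t, rfl, by rw [hxy, hy, h]⟩
    · rintro ⟨y, hy, hxy⟩
      simp only [Set.mem_singleton_iff] at hy
      exact ⟨C.lcomp s, rfl, by rw [hxy, hy, h]⟩
  rw [this]

end FracBrauerConfig

/-- in an f-BC of type S, if `u R v` in `𝓔` and `w` is a formal path
such that the concatenation `wu` again lies in `𝓔`, then `wv` lies in `𝓔` and
`(wu) R (wv)`. -/
theorem stmt18 {E : Type*} (C : FracBrauerConfig E) (hS : C.TypeS)
    (u v : Set E × List (Set E)) (hR : C.Rrel u v) (w : List (Set E))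
    (hw : (u.1, u.2 ++ w) ∈ Set.range C.lab) :
    (v.1, v.2 ++ w) ∈ Set.range C.lab ∧ C.Rrel (u.1, u.2 ++ w) (v.1, v.2 ++ w) := by
  obtain ⟨p, q, hu, hv, hpq⟩ := hR
  subst hu; subst hv
  obtain ⟨r, hr⟩ := hw
  obtain ⟨⟨e, n⟩, hn⟩ := p
  obtain ⟨⟨f, m⟩, hm⟩ := q
  obtain ⟨⟨e', N⟩, hN⟩ := r
  simp only [C.lab_def] at hr ⊢
  have hn' : n ≤ C.d e := hn
  have hm' : m ≤ C.d f := hm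
  have hN' : N ≤ C.d e' := hN
  obtain ⟨hrP, hrl⟩ := Prod.ext_iff.mp hr
  obtain ⟨hN2, hre, hrw⟩ := FracBrauerConfig.map_range_append_ext hrl
  have hpq0 := hpq
  rw [C.lab_eq_iff] at hpq
  simp only [FracBrauerConfig.lcomp] at hpq
  -- p' : the initial segment of r, identical to p
  have hn'' : n ≤ C.d e' := by omega
  have hlabp' : C.lab ⟨(e', n), hn''⟩ = C.lab ⟨(e, n), hn⟩ :=
    (C.lab_eq_iff _ _).mpr ⟨hrP, rfl, fun i hi => hre i hi⟩
  have hq_mem : (⟨(f, m), hm⟩ : C.StdSeq) ∈ C.f7set ⟨(e', n), hn''⟩ := by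
    rw [hS _ _ hlabp', C.f7set_eq_of_lcomp _ _ hpq0]
    exact C.mem_f7set_self _
  obtain ⟨x, ⟨y, hy, rfl⟩, hqx⟩ := hq_mem
  obtain ⟨z, hz, hyz⟩ := hy
  rw [Set.mem_singleton_iff] at hz
  subst hz
  obtain ⟨⟨b, l⟩, hl⟩ := y
  have hl' : l ≤ C.d b := hl
  rw [C.lab_eq_iff] at hyz hqx
  simp only [FracBrauerConfig.lcomp, FracBrauerConfig.rcomp] at hyz hqx
  obtain ⟨hPb, hlb, hLb⟩ := hyz
  obtain ⟨hPf, hml, hLf⟩ := hqx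
  -- numerics
  have hdb : C.d b = m + l := by omega
  have hkl : w.length ≤ l := by omega
  have hlm : (l : ℤ) - (C.d b : ℤ) = -(m : ℤ) := by omega
  -- the new base angle
  set f' : E := (C.g ^ (-(m : ℤ))) b with hf'
  have hdf' : C.d f' = C.d b := C.f3 b _
  have hgf' : ∀ i : ℤ, (C.g ^ i) f' = (C.g ^ (i - m)) b := fun i => by
    rw [hf', ← C.g_add]; ring_nf
  have hr'bd : ((f', m + w.length) : E × ℕ).2 ≤ C.d (f', m + w.length).1 := by
    show m + w.length ≤ C.d f'
    rw [hdf']; omega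
  -- labels of the new standard sequence
  have hlabr' : C.lab ⟨(f', m + w.length), hr'bd⟩ =
      (C.P f, ((List.range m).map fun i : ℕ => C.L ((C.g ^ (i : ℤ)) f)) ++ w) := by
    rw [C.lab_def]
    refine Prod.ext ?_ ?_
    · show C.P f' = C.P f
      rw [hlm] at hPf
      exact hPf.symm
    · show (List.range (m + w.length)).map _ = _
      apply FracBrauerConfig.map_range_add
      · intro i hi
        rw [hgf' i]
        have h := hLf i hi
        rw [hlm, ← C.g_add] at h
        rw [show (i : ℤ) + -(m : ℤ) = (i : ℤ) - m from by ring] at h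
        exact h.symm
      · intro j hj
        rw [hgf', show ((m + j : ℕ) : ℤ) - (m : ℤ) = (j : ℤ) from by push_cast; ring]
        have h1 := hLb j (by omega)
        rw [← C.g_add] at h1
        have h2 := hrw j hj
        rw [show ((j : ℤ) + n) = ((n + j : ℕ) : ℤ) from by push_cast; ring] at h1
        rw [h1, h2]
  refine ⟨⟨_, hlabr'⟩, ⟨⟨(e', N), hN⟩, ⟨(f', m + w.length), hr'bd⟩, ?_, ?_, ?_⟩⟩
  · rw [C.lab_def]; exact hr.symm
  · exact hlabr'.symm
  · -- identical left complements
    rw [C.lab_eq_iff]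
    simp only [FracBrauerConfig.lcomp]
    have hbase : ∀ j : ℕ, j ≤ w.length →
        C.P ((C.g ^ ((n + j : ℕ) : ℤ)) e') = C.P ((C.g ^ (j : ℤ)) b) := by
      intro j hj
      cases j with
      | zero =>
        simpa using hPb.symm
      | succ j' =>
        have hLj : C.L ((C.g ^ (j' : ℤ)) b) = C.L ((C.g ^ ((n + j' : ℕ) : ℤ)) e') := by
          have h1 := hLb j' (by omega)
          rw [← C.g_add] at h1
          rw [show ((j' : ℤ) + n) = ((n + j' : ℕ) : ℤ) from by push_cast; ring] at h1
          exact h1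
        have h2 := C.f2 _ _ hLj.symm
        rw [← C.g_succ, ← C.g_succ] at h2
        rw [show ((n + j' : ℕ) : ℤ) + 1 = ((n + (j' + 1) : ℕ) : ℤ) from by push_cast; ring,
          show ((j' : ℤ) + 1) = (((j' + 1 : ℕ)) : ℤ) from by push_cast; ring] at h2
        exact h2
    have hbk := hbase w.length le_rfl
    refine ⟨?_, by omega, ?_⟩
    · show C.P ((C.g ^ (N : ℤ)) e') = C.P ((C.g ^ ((m + w.length : ℕ) : ℤ)) f')
      rw [hgf', show ((m + w.length : ℕ) : ℤ) - (m : ℤ) = ((w.length : ℕ) : ℤ) from by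
        push_cast; ring, show (N : ℤ) = ((n + w.length : ℕ) : ℤ) from by omega]
      exact hbk
    · intro i hi
      show C.L ((C.g ^ (i : ℤ)) ((C.g ^ (N : ℤ)) e')) =
        C.L ((C.g ^ (i : ℤ)) ((C.g ^ ((m + w.length : ℕ) : ℤ)) f'))
      rw [hgf', ← C.g_add, ← C.g_add]
      have h1 := hLb (w.length + i) (by omega)
      rw [← C.g_add] at h1
      rw [show ((i : ℤ) + (((m + w.length : ℕ) : ℤ) - m)) = ((w.length + i : ℕ) : ℤ) from by
        push_cast; ring, show ((i : ℤ) + (N : ℤ)) = (((w.length + i : ℕ) : ℤ) + n) from by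
        omega]
      exact h1.symm
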